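/- Let H be a connected r-uniform hypergraph (r ≥ 2) with spectral radius ρ and principal eigenvector x. If u, v are vertices at hypergraph distance d(u,v) = ℓ, then ρ^{−ℓ} ≤ x_u/x_v ≤ ρ^{ℓ}. In particular the principal ratio γ(H) = x_max/x_min satisfies γ(H) ≤ ρ^{D}, where D is the diameter of H. -/
import Mathlib


/-- `hconn E k u v` : there is a walk of length `k` from `u` to `v` in the hypergraph
with edge set `E`, i.e. an alternating sequence of vertices and edges where consecutive
vertices both lie in the connecting edge. -/
def hconn {n : ℕ} (E : Finset (Finset (Fin n))) : ℕ → Fin n → Fin n → Prop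
  | 0, u, v => u = v
  | k + 1, u, v => ∃ e ∈ E, ∃ w ∈ e, u ∈ e ∧ hconn E k w v

/-- Distance between two vertices of a hypergraph: minimum length of a connecting walk. -/
noncomputable def hdist {n : ℕ} (E : Finset (Finset (Fin n))) (u v : Fin n) : ℕ :=
  sInf {k | hconn E k u v}

/-- Diameter of a hypergraph: maximum distance between two vertices. -/
noncomputable def hdiam {n : ℕ} (E : Finset (Finset (Fin n))) : ℕ :=
  sSup {d | ∃ u v : Fin n, hdist E u v = d}

/-- A hypergraph is connected if any two vertices are joined by a walk. -/
def HConnected {n : ℕ} (E : Finset (Finset (Fin n))) : Prop :=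
  ∀ u v : Fin n, ∃ k, hconn E k u v

/-- Degree of a vertex: the number of edges containing it. -/
def hdeg {n : ℕ} (E : Finset (Finset (Fin n))) (v : Fin n) : ℕ :=
  (E.filter (fun e => v ∈ e)).card

/-- The eigenvalue equation `A(H) x^{r-1} = ρ x^{[r-1]}` for the adjacency tensor of an
`r`-uniform hypergraph with edge set `E`: the `i`-th entry of `A(H) x^{r-1}` equals
`∑_{e ∋ i} ∏_{j ∈ e \ {i}} x_j`. -/
def EigenEq {n : ℕ} (E : Finset (Finset (Fin n))) (r : ℕ) (ρ : ℝ) (x : Fin n → ℝ) : Prop :=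
  ∀ i : Fin n, ∑ e ∈ E.filter (fun e => i ∈ e), ∏ j ∈ e.erase i, x j = ρ * x i ^ (r - 1)

private lemma pow_pred_mul {a : ℝ} {r : ℕ} (hr : 1 ≤ r) : a ^ (r - 1) * a = a ^ r := by
  rw [← pow_succ]; congr 1; omega

private lemma aux_key {n r : ℕ} (hr : 2 ≤ r) {E : Finset (Finset (Fin n))}
    {ρ : ℝ} {x : Fin n → ℝ} (hx : ∀ i, 0 < x i) (heig : EigenEq E r ρ x)
    {e : Finset (Fin n)} (he : e ∈ E)
    {j : Fin n} (hj : j ∈ e) : (∏ k ∈ e, x k) ≤ ρ * x j ^ r := by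
  have h1 : ∏ k ∈ e.erase j, x k ≤ ρ * x j ^ (r - 1) := by
    have hs : (∏ k ∈ e.erase j, x k) ≤
        ∑ s ∈ E.filter (fun s => j ∈ s), ∏ k ∈ s.erase j, x k :=
      Finset.single_le_sum (f := fun s : Finset (Fin n) => ∏ k ∈ s.erase j, x k)
        (fun s _ => Finset.prod_nonneg fun k _ => (hx k).le)
        (Finset.mem_filter.mpr ⟨he, hj⟩)
    calc (∏ k ∈ e.erase j, x k) ≤ ∑ s ∈ E.filter (fun s => j ∈ s), ∏ k ∈ s.erase j, x k := hs
      _ = ρ * x j ^ (r - 1) := heig j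
  have hpr : r = (r - 1) + 1 := by omega
  calc (∏ k ∈ e, x k) = (∏ k ∈ e.erase j, x k) * x j := by
        rw [mul_comm, Finset.mul_prod_erase e x hj]
    _ ≤ (ρ * x j ^ (r - 1)) * x j := by
        exact mul_le_mul_of_nonneg_right h1 (hx j).le
    _ = ρ * x j ^ r := by
        have h2 : x j ^ (r - 1) * x j = x j ^ r := pow_pred_mul (by omega)
        rw [mul_assoc, h2]

private lemma aux_step {n r : ℕ} (hr : 2 ≤ r) {E : Finset (Finset (Fin n))}
    (hu : ∀ e ∈ E, e.card = r)
    {ρ : ℝ} {x : Fin n → ℝ} (hx : ∀ i, 0 < x i) (heig : EigenEq E r ρ x)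
    {e : Finset (Fin n)} (he : e ∈ E)
    {u v : Fin n} (hue : u ∈ e) (hve : v ∈ e) : x u ≤ ρ * x v := by
  have hr1 : 1 ≤ r := by omega
  set P := ∏ k ∈ e, x k with hP
  have hPpos : 0 < P := Finset.prod_pos fun k _ => hx k
  have hρ : 0 < ρ := by
    have h := aux_key hr hx heig he hue
    nlinarith [pow_pos (hx u) r]
  set Q := ∏ k ∈ e.erase u, x k with hQ
  have hQpos : 0 < Q := Finset.prod_pos fun k _ => hx (k)
  have hPQ : P = x u * Q := (Finset.mul_prod_erase e x hue).symm
  have hcard : (e.erase u).card = r - 1 := by rw [Finset.card_erase_of_mem hue, hu e he]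
  have h3 : P ^ (r - 1) ≤ ρ ^ (r - 1) * Q ^ r := by
    have h4 : ∏ _j ∈ e.erase u, P ≤ ∏ j ∈ e.erase u, (ρ * x j ^ r) :=
      Finset.prod_le_prod (fun j _ => hPpos.le)
        (fun j hj => aux_key hr hx heig he (Finset.mem_of_mem_erase hj))
    rw [Finset.prod_const, hcard] at h4
    calc P ^ (r - 1) ≤ ∏ j ∈ e.erase u, (ρ * x j ^ r) := h4
      _ = ρ ^ (r - 1) * Q ^ r := by
        rw [Finset.prod_mul_distrib, Finset.prod_const, hcard, ← Finset.prod_pow]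
  have h5 : x u ^ (r - 1) * Q ^ (r - 1) ≤ (ρ ^ (r - 1) * Q) * Q ^ (r - 1) := by
    calc x u ^ (r - 1) * Q ^ (r - 1) = P ^ (r - 1) := by rw [hPQ, mul_pow]
      _ ≤ ρ ^ (r - 1) * Q ^ r := h3
      _ = (ρ ^ (r - 1) * Q) * Q ^ (r - 1) := by
          have hq : Q ^ (r - 1) * Q = Q ^ r := pow_pred_mul hr1
          rw [← hq]; ring
  have h6 : x u ^ (r - 1) ≤ ρ ^ (r - 1) * Q :=
    le_of_mul_le_mul_right h5 (pow_pos hQpos _)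
  have h7 : x u ^ r ≤ (ρ * x v) ^ r := by
    have hPv : P ≤ ρ * x v ^ r := aux_key hr hx heig he hve
    calc x u ^ r = x u ^ (r - 1) * x u := (pow_pred_mul hr1).symm
      _ ≤ (ρ ^ (r - 1) * Q) * x u := mul_le_mul_of_nonneg_right h6 (hx u).le
      _ = ρ ^ (r - 1) * P := by rw [hPQ]; ring
      _ ≤ ρ ^ (r - 1) * (ρ * x v ^ r) :=
          mul_le_mul_of_nonneg_left hPv (pow_nonneg hρ.le _)
      _ = (ρ * x v) ^ r := by
          have hρr : ρ ^ (r - 1) * ρ = ρ ^ r := pow_pred_mul hr1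
          rw [mul_pow, ← hρr]; ring
  exact le_of_pow_le_pow_left₀ (by omega) (mul_nonneg hρ.le (hx v).le) h7

private lemma aux_walk {n r : ℕ} (hr : 2 ≤ r) {E : Finset (Finset (Fin n))}
    (hu : ∀ e ∈ E, e.card = r) {ρ : ℝ} {x : Fin n → ℝ} (hx : ∀ i, 0 < x i)
    (heig : EigenEq E r ρ x) (hρ : 0 ≤ ρ) :
    ∀ k (u v : Fin n), hconn E k u v → x u ≤ ρ ^ k * x v ∧ x v ≤ ρ ^ k * x u := by
  intro k
  induction k with
  | zero =>
    intro u v h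
    have huv : u = v := h
    subst huv
    simp
  | succ k ih =>
    intro u v h
    obtain ⟨e, he, w, hwe, hue, hwalk⟩ := h
    obtain ⟨h1, h2⟩ := ih w v hwalk
    have s1 : x u ≤ ρ * x w := aux_step hr hu hx heig he hue hwe
    have s2 : x w ≤ ρ * x u := aux_step hr hu hx heig he hwe hue
    constructor
    · calc x u ≤ ρ * x w := s1
        _ ≤ ρ * (ρ ^ k * x v) := mul_le_mul_of_nonneg_left h1 hρ
        _ = ρ ^ (k + 1) * x v := by ring
    · calc x v ≤ ρ ^ k * x w := h2
        _ ≤ ρ ^ k * (ρ * x u) := mul_le_mul_of_nonneg_left s2 (pow_nonneg hρ k)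
        _ = ρ ^ (k + 1) * x u := by ring

private lemma hconn_empty {n : ℕ} : ∀ (k : ℕ) (u v : Fin n),
    hconn (∅ : Finset (Finset (Fin n))) k u v → u = v := by
  intro k
  induction k with
  | zero => intro u v h; exact h
  | succ k ih =>
    intro u v h
    obtain ⟨e, he, _⟩ := h
    exact absurd he (Finset.notMem_empty e)

theorem stmt_15 (n r : ℕ) (hr : 2 ≤ r) (hn : 0 < n) (E : Finset (Finset (Fin n)))
    (hu : ∀ e ∈ E, e.card = r) (hc : HConnected E)
    (ρ : ℝ) (x : Fin n → ℝ) (hx : ∀ i, 0 < x i) (hnorm : ∑ i, x i ^ r = 1)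
    (heig : EigenEq E r ρ x) (D : ℕ) (hD : hdiam E = D) :
    (∀ u v : Fin n, ∀ ℓ : ℕ, hdist E u v = ℓ →
      (ρ ^ ℓ)⁻¹ ≤ x u / x v ∧ x u / x v ≤ ρ ^ ℓ) ∧
    Finset.univ.sup' ⟨⟨0, hn⟩, Finset.mem_univ _⟩ x /
        Finset.univ.inf' ⟨⟨0, hn⟩, Finset.mem_univ _⟩ x ≤ ρ ^ D := by
  by_cases hE : E = ∅
  · subst hE
    have hall : ∀ u v : Fin n, u = v := by
      intro u v
      obtain ⟨k, hk⟩ := hc u v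
      exact hconn_empty k u v hk
    have hdist0 : ∀ u v : Fin n, hdist (∅ : Finset (Finset (Fin n))) u v = 0 := by
      intro u v
      have huv : u = v := hall u v
      subst huv
      exact Nat.sInf_eq_zero.mpr (Or.inl (rfl : hconn ∅ 0 u u))
    have hDset : {d | ∃ u v : Fin n, hdist (∅ : Finset (Finset (Fin n))) u v = d} = {0} := by
      ext d
      constructor
      · rintro ⟨u, v, h⟩
        simp [← h, hdist0 u v]
      · rintro rfl
        exact ⟨⟨0, hn⟩, ⟨0, hn⟩, hdist0 _ _⟩
    have hD0 : D = 0 := by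
      rw [← hD]
      unfold hdiam
      rw [hDset, csSup_singleton]
    constructor
    · intro u v ℓ hℓ
      have huv : u = v := hall u v
      subst huv
      rw [hdist0 u u] at hℓ
      subst hℓ
      simp [div_self (hx u).ne']
    · have hs : Finset.univ.sup' ⟨⟨0, hn⟩, Finset.mem_univ _⟩ x = x ⟨0, hn⟩ :=
        le_antisymm (Finset.sup'_le _ _ fun i _ => by rw [hall i ⟨0, hn⟩])
          (Finset.le_sup' _ (Finset.mem_univ _))
      have hi : Finset.univ.inf' ⟨⟨0, hn⟩, Finset.mem_univ _⟩ x = x ⟨0, hn⟩ :=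
        le_antisymm (Finset.inf'_le _ (Finset.mem_univ _))
          (Finset.le_inf' _ _ fun i _ => by rw [hall i ⟨0, hn⟩])
      rw [hs, hi, div_self (hx _).ne', hD0, pow_zero]
  · obtain ⟨e0, he0⟩ := Finset.nonempty_of_ne_empty hE
    have hvert : ∀ w : Fin n, ∃ e ∈ E, w ∈ e := by
      intro w
      have hcard2 : 1 < e0.card := by rw [hu e0 he0]; omega
      obtain ⟨a, ha, b, hb, hab⟩ := Finset.one_lt_card.mp hcard2
      have hz : ∃ z : Fin n, z ≠ w := by
        by_cases haw : a = w
        · exact ⟨b, fun hbw => hab (haw.trans hbw.symm)⟩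
        · exact ⟨a, haw⟩
      obtain ⟨z, hzw⟩ := hz
      obtain ⟨k, hk⟩ := hc w z
      cases k with
      | zero => exact absurd (hk : w = z) (fun h => hzw h.symm)
      | succ m =>
        obtain ⟨e, he, w', hw'e, hwe, _⟩ := hk
        exact ⟨e, he, hwe⟩
    have hρpos : 0 < ρ := by
      obtain ⟨e, he, hin⟩ := hvert ⟨0, hn⟩
      have hkey := aux_key hr hx heig he hin
      have hP : 0 < ∏ k ∈ e, x k := Finset.prod_pos fun k _ => hx k
      nlinarith [pow_pos (hx ⟨0, hn⟩) r]
    have hρ1 : 1 ≤ ρ := by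
      obtain ⟨v0, _, hv0⟩ := Finset.exists_min_image Finset.univ x ⟨⟨0, hn⟩, Finset.mem_univ _⟩
      obtain ⟨e, he, hin⟩ := hvert v0
      have hkey := aux_key hr hx heig he hin
      have hlow : x v0 ^ r ≤ ∏ k ∈ e, x k := by
        have hp : ∏ k ∈ e, x v0 ≤ ∏ k ∈ e, x k :=
          Finset.prod_le_prod (fun k _ => (hx v0).le) (fun k _ => hv0 k (Finset.mem_univ k))
        rwa [Finset.prod_const, hu e he] at hp
      nlinarith [pow_pos (hx v0) r]
    have hdist_conn : ∀ u v : Fin n, hconn E (hdist E u v) u v := fun u v =>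
      Nat.sInf_mem (hc u v)
    have part1 : ∀ u v : Fin n, ∀ ℓ : ℕ, hdist E u v = ℓ →
        (ρ ^ ℓ)⁻¹ ≤ x u / x v ∧ x u / x v ≤ ρ ^ ℓ := by
      intro u v ℓ hℓ
      have hcℓ : hconn E ℓ u v := hℓ ▸ hdist_conn u v
      obtain ⟨h1, h2⟩ := aux_walk hr hu hx heig hρpos.le ℓ u v hcℓ
      constructor
      · have hvu : x v / x u ≤ ρ ^ ℓ := (div_le_iff₀ (hx u)).mpr h2
        have hinv := inv_anti₀ (div_pos (hx v) (hx u)) hvu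
        rwa [inv_div] at hinv
      · exact (div_le_iff₀ (hx v)).mpr h1
    refine ⟨part1, ?_⟩
    obtain ⟨u, _, hsup⟩ := Finset.exists_mem_eq_sup'
      (⟨⟨0, hn⟩, Finset.mem_univ _⟩ : (Finset.univ : Finset (Fin n)).Nonempty) x
    obtain ⟨v, _, hinf⟩ := Finset.exists_mem_eq_inf'
      (⟨⟨0, hn⟩, Finset.mem_univ _⟩ : (Finset.univ : Finset (Fin n)).Nonempty) x
    have hℓD : hdist E u v ≤ D := by
      rw [← hD]
      unfold hdiam
      have hfin : ({d | ∃ u v : Fin n, hdist E u v = d}).Finite := by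
        have hset : {d | ∃ u v : Fin n, hdist E u v = d} =
            Set.range (fun p : Fin n × Fin n => hdist E p.1 p.2) := by
          ext d
          constructor
          · rintro ⟨a, b, h⟩; exact ⟨(a, b), h⟩
          · rintro ⟨⟨a, b⟩, h⟩; exact ⟨a, b, h⟩
        rw [hset]
        exact Set.finite_range _
      exact le_csSup hfin.bddAbove ⟨u, v, rfl⟩
    calc Finset.univ.sup' ⟨⟨0, hn⟩, Finset.mem_univ _⟩ x /
          Finset.univ.inf' ⟨⟨0, hn⟩, Finset.mem_univ _⟩ x = x u / x v := by rw [hsup, hinf]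
      _ ≤ ρ ^ hdist E u v := (part1 u v _ rfl).2
      _ ≤ ρ ^ D := pow_le_pow_right₀ hρ1 hℓD
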